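/- If A ⊆ ℕ is an AP-set and f : ℕ → ℕ, then there exists an AP-set C ⊆ A such that either f is constant on C, or f is finite-to-one on C and, enumerating f[C] in increasing order as x₀ < x₁ < x₂ < ..., one has (x_{n+1} - x_n) → ∞ as n → ∞. -/

import Mathlib

open Set Filter

/-- `A` contains arithmetic progressions of all finite lengths. -/
def IsAPSet (A : Set ℕ) : Prop :=
  ∀ k : ℕ, ∃ a d : ℕ, 0 < d ∧ ∀ i < k, a + i * d ∈ A

/-- The set of finite sums of distinct elements of `B`. -/
def FS (B : Set ℕ) : Set ℕ :=
  {n | ∃ F : Finset ℕ, F.Nonempty ∧ ↑F ⊆ B ∧ n = ∑ i ∈ F, i}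

/-- `S` is an IP-set: it contains `FS B` for some infinite `B`. -/
def IsIPSet (S : Set ℕ) : Prop :=
  ∃ B : Set ℕ, B.Infinite ∧ FS B ⊆ S

/-- `f` is finite-to-one on `C`. -/
def FinToOneOn (f : ℕ → ℕ) (C : Set ℕ) : Prop :=
  ∀ m : ℕ, (C ∩ f ⁻¹' {m}).Finite

open Combinatorics in
theorem bdd_vdW (m : ℕ) (κ : Type) [Finite κ] :
    ∃ N : ℕ, ∀ c : ℕ → κ, ∃ a d : ℕ, 0 < d ∧ a + m * d ≤ N ∧
      ∃ j, ∀ i ≤ m, c (a + i * d) = j := by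
  classical
  obtain ⟨ι, _inst, hι⟩ := Line.exists_mono_in_high_dimension (Fin (m+1)) κ
  refine ⟨Fintype.card ι * m, fun c => ?_⟩
  obtain ⟨l, j, hl⟩ := hι fun v => c (∑ i, (v i : ℕ))
  set s : Finset ι := Finset.univ.filter (fun i => l.idxFun i = none) with hs
  set a : ℕ := ∑ i ∈ sᶜ, ((l.idxFun i).map (fun (x : Fin (m+1)) => (x : ℕ))).getD 0 with ha
  have hd : 0 < s.card := by
    rw [Finset.card_pos]
    exact ⟨l.proper.choose, by rw [hs, Finset.mem_filter]; exact ⟨Finset.mem_univ _, l.proper.choose_spec⟩⟩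
  have key : ∀ x : Fin (m+1), (∑ i, (((l.idxFun i).getD x : Fin (m+1)) : ℕ)) = x * s.card + a := by
    intro x
    rw [← Finset.sum_add_sum_compl s]
    congr 1
    · calc ∑ i ∈ s, (((l.idxFun i).getD x : Fin (m+1)) : ℕ)
          = ∑ _i ∈ s, (x : ℕ) := Finset.sum_congr rfl (fun i hi => by
            rw [hs, Finset.mem_filter] at hi
            rw [hi.2, Option.getD_none])
        _ = x * s.card := by rw [Finset.sum_const, smul_eq_mul, mul_comm]
    · exact Finset.sum_congr rfl (fun i hi => by
        rw [hs, Finset.compl_filter, Finset.mem_filter] at hi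
        obtain ⟨y, hy⟩ := Option.ne_none_iff_exists.mp hi.2
        rw [← hy]; simp)
  refine ⟨a, s.card, hd, ?_, j, ?_⟩
  · have hk := key ⟨m, by omega⟩
    have hb : (∑ i, (((l.idxFun i).getD (⟨m, by omega⟩ : Fin (m+1)) : Fin (m+1)) : ℕ))
        ≤ ∑ _i : ι, m := Finset.sum_le_sum (fun i _ => Fin.is_le _)
    rw [hk, Finset.sum_const, smul_eq_mul, Finset.card_univ] at hb
    have hc : s.card ≤ Fintype.card ι := Finset.card_le_univ s
    simp only [Fin.val_mk] at hb
    nlinarith [Nat.zero_le a]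
  · intro i hi
    have hx := hl ⟨i, by omega⟩
    simp only [Line.instCoeFun, Line.coe_apply] at hx
    rw [show ∀ z : Fin (m+1), (∑ x : ι, (((l.idxFun x).getD z : Fin (m+1)) : ℕ)) = _ from key] at hx
    simpa [mul_comm, add_comm] using hx

lemma isAPSet_mono {S T : Set ℕ} (h : S ⊆ T) (hS : IsAPSet S) : IsAPSet T := by
  intro k
  obtain ⟨a, d, hd, hm⟩ := hS k
  exact ⟨a, d, hd, fun i hi => h (hm i hi)⟩

lemma apset_partition {κ : Type} [Finite κ] {S : Set ℕ} (hS : IsAPSet S) (c : ℕ → κ) :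
    ∃ j, IsAPSet {x | x ∈ S ∧ c x = j} := by
  have main : ∀ m : ℕ, ∃ j : κ, ∃ a d : ℕ, 0 < d ∧
      ∀ i ≤ m, a + i * d ∈ {x | x ∈ S ∧ c x = j} := by
    intro m
    obtain ⟨N, hN⟩ := bdd_vdW m κ
    obtain ⟨q, e, he, hq⟩ := hS (N + 1)
    obtain ⟨a, d, hd, hNd, j, hj⟩ := hN (fun i => c (q + i * e))
    refine ⟨j, q + a * e, d * e, by positivity, fun i hi => ?_⟩
    have h1 : q + a * e + i * (d * e) = q + (a + i * d) * e := by ring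
    have h2 : a + i * d < N + 1 := by nlinarith
    rw [h1]
    exact ⟨hq _ h2, hj i hi⟩
  choose J a d hd hJ using main
  obtain ⟨j, hj⟩ := Finite.exists_infinite_fiber J
  refine ⟨j, fun k => ?_⟩
  have hinf : (J ⁻¹' {j}).Infinite := Set.infinite_coe_iff.mp hj
  obtain ⟨m, hmj, hm⟩ := hinf.exists_gt k
  simp only [mem_preimage, mem_singleton_iff] at hmj
  refine ⟨a m, d m, hd m, fun i hi => ?_⟩
  have := hJ m i (by omega)
  rwa [hmj] at this


lemma large_values {A : Set ℕ} {f : ℕ → ℕ} (hc : ∀ v, ¬ IsAPSet (A ∩ f ⁻¹' {v}))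
    {S : Set ℕ} (hSA : S ⊆ A) (hS : IsAPSet S) (M : ℕ) :
    IsAPSet {x | x ∈ S ∧ M < f x} := by
  classical
  obtain ⟨j, hj⟩ := apset_partition hS
    (fun x => if h : f x ≤ M then (some ⟨f x, by omega⟩ : Option (Fin (M + 1))) else none)
  cases j with
  | none =>
    convert hj using 1
    ext x
    simp only [mem_setOf_eq, and_congr_right_iff]
    intro _
    split
    · simp; omega
    · simp; omega
  | some v =>
    exfalso
    apply hc (v : ℕ)
    refine isAPSet_mono ?_ hj
    intro x hx
    obtain ⟨hxS, hxc⟩ := hx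
    by_cases h : f x ≤ M
    · simp only [h, dif_pos, Option.some.injEq] at hxc
      have : f x = v := by rw [← hxc]
      exact ⟨hSA hxS, by simpa using this⟩
    · simp [h] at hxc
  
lemma sep_subset {f : ℕ → ℕ} {S : Set ℕ} (hS : IsAPSet S) (g : ℕ) (hg : 0 < g) :
    ∃ T, T ⊆ S ∧ IsAPSet T ∧ ∀ x ∈ T, ∀ y ∈ T, f x % g = f y % g := by
  obtain ⟨j, hj⟩ := apset_partition hS (fun x => (⟨f x % g, Nat.mod_lt _ hg⟩ : Fin g))
  refine ⟨_, fun x hx => hx.1, hj, fun x hx y hy => ?_⟩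
  have h12 := hx.2.trans hy.2.symm
  simpa [Fin.mk.injEq] using h12

lemma mod_sep {a b g : ℕ} (h : a % g = b % g) (hab : a < b) : g ≤ b - a := by
  have hd : g ∣ b - a := (Nat.modEq_iff_dvd' hab.le).mp h
  exact Nat.le_of_dvd (by omega) hd

structure APStage (A : Set ℕ) (f : ℕ → ℕ) (g : ℕ) where
  S : Set ℕ
  Q : Finset ℕ
  M : ℕ
  hSA : S ⊆ A
  hS : IsAPSet S
  hsep : ∀ x ∈ S, ∀ y ∈ S, f x % (g + 1) = f y % (g + 1)
  hQS : ∀ x ∈ Q, x ∈ S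
  hAP : ∃ a d : ℕ, 0 < d ∧ ∀ i < g + 1, a + i * d ∈ Q
  hQM : ∀ x ∈ Q, f x ≤ M
  hQlow : ∀ x ∈ Q, g < f x

variable {A : Set ℕ} {f : ℕ → ℕ}

lemma exists_init (hA : IsAPSet A) (hc : ∀ v, ¬ IsAPSet (A ∩ f ⁻¹' {v})) :
    Nonempty (APStage A f 0) := by
  have h0 : IsAPSet {x | x ∈ A ∧ 0 < f x} := large_values hc subset_rfl hA 0
  obtain ⟨a, d, hd, hm⟩ := h0 1
  have hx0 : a ∈ {x | x ∈ A ∧ 0 < f x} := by simpa using hm 0 (by omega)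
  refine ⟨⟨A, {a}, f a, subset_rfl, hA, ?_, ?_, ⟨a, 1, by omega, ?_⟩, ?_, ?_⟩⟩
  · intro x _ y _; simp [Nat.mod_one]
  · intro x hx; rw [Finset.mem_singleton] at hx; subst hx; exact hx0.1
  · intro i hi
    have : i = 0 := by omega
    subst this; simp
  · intro x hx; rw [Finset.mem_singleton] at hx; subst hx; rfl
  · intro x hx; rw [Finset.mem_singleton] at hx; subst hx; exact hx0.2

lemma exists_next (hc : ∀ v, ¬ IsAPSet (A ∩ f ⁻¹' {v})) {g : ℕ} (st : APStage A f g) :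
    ∃ st' : APStage A f (g + 1),
      st'.S ⊆ st.S ∧ st.M ≤ st'.M ∧ ∀ x ∈ st'.Q, st.M + g + 1 < f x := by
  obtain ⟨T, hTS, hT, hTsep⟩ := sep_subset (f := f) st.hS (g + 2) (by omega)
  have hTA : T ⊆ A := hTS.trans st.hSA
  have hU : IsAPSet {x | x ∈ T ∧ st.M + g + 1 < f x} := large_values hc hTA hT (st.M + g + 1)
  obtain ⟨a, d, hd, hAP⟩ := hU (g + 2)
  set Q' : Finset ℕ := (Finset.range (g + 2)).image (fun i => a + i * d) with hQ'
  have hQmem : ∀ x ∈ Q', x ∈ T ∧ st.M + g + 1 < f x := by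
    intro x hx
    rw [hQ', Finset.mem_image] at hx
    obtain ⟨i, hi, rfl⟩ := hx
    rw [Finset.mem_range] at hi
    exact hAP i hi
  refine ⟨⟨T, Q', Q'.sup f + st.M, hTA, hT, hTsep, fun x hx => (hQmem x hx).1,
      ⟨a, d, hd, fun i hi => ?_⟩, fun x hx => ?_, fun x hx => ?_⟩,
      hTS, Nat.le_add_left _ _, fun x hx => (hQmem x hx).2⟩
  · exact Finset.mem_image.mpr ⟨i, Finset.mem_range.mpr hi, rfl⟩
  · exact le_trans (Finset.le_sup hx) (Nat.le_add_right _ _)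
  · have := (hQmem x hx).2; omega

noncomputable def stages (hA : IsAPSet A) (hc : ∀ v, ¬ IsAPSet (A ∩ f ⁻¹' {v})) :
    ∀ g : ℕ, APStage A f g :=
  fun g => Nat.rec (exists_init hA hc).some (fun g st => (exists_next hc st).choose) g

variable (hA : IsAPSet A) (hc : ∀ v, ¬ IsAPSet (A ∩ f ⁻¹' {v}))

lemma stages_succ (g : ℕ) :
    (stages hA hc (g + 1)).S ⊆ (stages hA hc g).S ∧
    (stages hA hc g).M ≤ (stages hA hc (g + 1)).M ∧
    ∀ x ∈ (stages hA hc (g + 1)).Q, (stages hA hc g).M + g + 1 < f x := by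
  have h : stages hA hc (g + 1) = (exists_next hc (stages hA hc g)).choose := rfl
  rw [h]
  exact (exists_next hc (stages hA hc g)).choose_spec

lemma stages_M_mono : Monotone (fun g => (stages hA hc g).M) :=
  monotone_nat_of_le_succ (fun g => (stages_succ hA hc g).2.1)

lemma stages_M_le {a b : ℕ} (hab : a ≤ b) : (stages hA hc a).M ≤ (stages hA hc b).M :=
  stages_M_mono hA hc hab

/-- The union of all the finite blocks. -/
def bigC : Set ℕ := ⋃ g, ((stages hA hc g).Q : Set ℕ)

lemma bigC_subset : bigC hA hc ⊆ A := by
  intro x hx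
  rw [bigC, mem_iUnion] at hx
  obtain ⟨g, hg⟩ := hx
  exact (stages hA hc g).hSA ((stages hA hc g).hQS x hg)

lemma bigC_apset : IsAPSet (bigC hA hc) := by
  intro k
  obtain ⟨a, d, hd, hm⟩ := (stages hA hc k).hAP
  refine ⟨a, d, hd, fun i hi => ?_⟩
  rw [bigC, mem_iUnion]
  exact ⟨k, hm i (by omega)⟩

lemma cross_blocks {a b x y : ℕ} (hab : a < b)
    (hx : x ∈ (stages hA hc a).Q) (hy : y ∈ (stages hA hc b).Q) : f x + b ≤ f y := by
  obtain ⟨b', rfl⟩ : ∃ b', b = b' + 1 := ⟨b - 1, by omega⟩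
  have h1 : (stages hA hc b').M + b' + 1 < f y := (stages_succ hA hc b').2.2 y hy
  have h2 : f x ≤ (stages hA hc a).M := (stages hA hc a).hQM x hx
  have h3 : (stages hA hc a).M ≤ (stages hA hc b').M := stages_M_le hA hc (by omega)
  omega

lemma gap_lemma {G v w : ℕ} (hv : v ∈ f '' bigC hA hc) (hw : w ∈ f '' bigC hA hc)
    (hvw : v < w) (hMv : (stages hA hc G).M < v) : G ≤ w - v := by
  obtain ⟨x, hxC, rfl⟩ := hv
  obtain ⟨y, hyC, rfl⟩ := hw
  rw [bigC, mem_iUnion] at hxC hyC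
  obtain ⟨a, hxa⟩ := hxC
  obtain ⟨b, hyb⟩ := hyC
  have hGa : G < a := by
    by_contra h
    have := (stages hA hc a).hQM x hxa
    have := stages_M_le hA hc (show a ≤ G by omega)
    omega
  rcases lt_trichotomy a b with h | h | h
  · have := cross_blocks hA hc h hxa hyb; omega
  · subst h
    have hsep := (stages hA hc a).hsep x ((stages hA hc a).hQS x hxa)
      y ((stages hA hc a).hQS y hyb)
    have := mod_sep hsep hvw
    omega
  · have := cross_blocks hA hc h hyb hxa; omega

lemma image_infinite : (f '' bigC hA hc).Infinite := by
  rw [Set.infinite_coe_iff.symm]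
  rw [Set.infinite_coe_iff]
  intro hfin
  obtain ⟨u, hu⟩ := hfin.bddAbove
  obtain ⟨a, d, hd, hm⟩ := (stages hA hc u).hAP
  have hmem : a ∈ (stages hA hc u).Q := by simpa using hm 0 (by omega)
  have h1 : u < f a := (stages hA hc u).hQlow a hmem
  have h2 : f a ≤ u := hu ⟨a, by rw [bigC]; exact mem_iUnion.mpr ⟨u, hmem⟩, rfl⟩
  omega

lemma fin_to_one : FinToOneOn f (bigC hA hc) := by
  intro m
  apply Set.Finite.subset (Set.Finite.biUnion (Finset.range m).finite_toSet
    (fun g _ => ((stages hA hc g).Q : Set ℕ).toFinite))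
  intro x hx
  obtain ⟨hxC, hxm⟩ := hx
  rw [bigC, mem_iUnion] at hxC
  obtain ⟨g, hg⟩ := hxC
  have h1 : g < f x := (stages hA hc g).hQlow x hg
  have h2 : f x = m := hxm
  exact mem_biUnion (by simp; omega) hg

lemma gaps_tendsto :
    Filter.Tendsto (fun n => Nat.nth (· ∈ f '' bigC hA hc) (n + 1)
      - Nat.nth (· ∈ f '' bigC hA hc) n) Filter.atTop Filter.atTop := by
  set p : ℕ → Prop := (· ∈ f '' bigC hA hc) with hp
  have hinf : (setOf p).Infinite := image_infinite hA hc
  rw [Filter.tendsto_atTop]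
  intro G
  filter_upwards [Filter.eventually_ge_atTop ((stages hA hc G).M + 1)] with n hn
  have h1 : p (Nat.nth p n) := Nat.nth_mem_of_infinite hinf n
  have h2 : p (Nat.nth p (n + 1)) := Nat.nth_mem_of_infinite hinf (n + 1)
  have h3 : Nat.nth p n < Nat.nth p (n + 1) := (Nat.nth_lt_nth hinf).mpr (by omega)
  have h4 : n ≤ Nat.nth p n := (Nat.nth_strictMono hinf).le_apply
  exact gap_lemma hA hc h1 h2 h3 (by omega)


theorem apSet_image_constant_or_sparse (A : Set ℕ) (hA : IsAPSet A) (f : ℕ → ℕ) :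
    ∃ C : Set ℕ, C ⊆ A ∧ IsAPSet C ∧
      ((∃ m, ∀ x ∈ C, f x = m) ∨
        (FinToOneOn f C ∧
          Filter.Tendsto
            (fun n => Nat.nth (· ∈ f '' C) (n + 1) - Nat.nth (· ∈ f '' C) n)
            Filter.atTop Filter.atTop)) := by
  by_cases hc : ∃ m, IsAPSet (A ∩ f ⁻¹' {m})
  · obtain ⟨m, hm⟩ := hc
    exact ⟨A ∩ f ⁻¹' {m}, inter_subset_left, hm,
      Or.inl ⟨m, fun x hx => hx.2⟩⟩
  · push_neg at hc
    exact ⟨bigC hA hc, bigC_subset hA hc, bigC_apset hA hc,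
      Or.inr ⟨fin_to_one hA hc, gaps_tendsto hA hc⟩⟩
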